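/- Let ℋ be a finite set, h* ∈ ℋ, and p a probability mass function on ℋ with p(h*) > 0. Let A be a cell and h(A) ∈ {−1,+1} the value each h ∈ ℋ takes on A; set s = h*(A). Let y be a {−1,+1}-valued random variable with q := P(y ≠ s) satisfying q ≤ α ≤ β < 1/2 for constants α, β with β > 0. Define the Bayes update p'(h) = p(h)·β^{(1−h(A)y)/2}(1−β)^{(1+h(A)y)/2} / Z, where Z is the normalizing constant making p' a probability mass function. Define C(p) = (1 − p(h*))/p(h*). Then E_y[C(p')] ≤ C(p); that is, the sequence C_n is a nonnegative supermartingale under the soft-decision GBS update whenever β ≥ α. -/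

import Mathlib

set_option maxHeartbeats 1000000


open Finset

/-- Lemma: one-step supermartingale property of SGBS. `ℋ` is a finite
hypothesis class with correct hypothesis `h*`, `p` a pmf on `ℋ` with `p(h*) > 0`, and
`v h ∈ {−1,+1}` the value of `h` on the queried cell `A`; `s = v h*`. The noisy response
`y` equals `s` with probability `1 − q` and `−s` with probability `q`, where
`q ≤ α ≤ β < 1/2`. `p'(y)` is the Bayes update of `p` with parameter `β` given response
`y`, and `C(p) = (1 − p(h*))/p(h*)`. Then `E_y[C(p')] ≤ C(p)`. -/
theorem stmt6 {H : Type*} [Fintype H] (hstar : H)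
    (p : H → ℝ) (hp0 : ∀ h, 0 ≤ p h) (hp1 : ∑ h, p h = 1) (hps : 0 < p hstar)
    (v : H → ℝ) (hv : ∀ h, v h = 1 ∨ v h = -1)
    (α β q : ℝ) (hq0 : 0 ≤ q) (hqα : q ≤ α) (hαβ : α ≤ β) (hβ0 : 0 < β) (hβ : β < 1 / 2)
    (p' : ℝ → H → ℝ)
    (hp' : ∀ y h, p' y h =
      p h * β ^ ((1 - v h * y) / 2) * (1 - β) ^ ((1 + v h * y) / 2) /
        ∑ h', p h' * β ^ ((1 - v h' * y) / 2) * (1 - β) ^ ((1 + v h' * y) / 2)) :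
    (1 - q) * ((1 - p' (v hstar) hstar) / p' (v hstar) hstar) +
      q * ((1 - p' (-v hstar) hstar) / p' (-v hstar) hstar) ≤
      (1 - p hstar) / p hstar := by
  have h1β : (0:ℝ) < 1 - β := by linarith
  set s := v hstar with hsdef
  have hs : s = 1 ∨ s = -1 := hv hstar
  have hss : s * s = 1 := by rcases hs with h | h <;> rw [h] <;> norm_num
  -- pointwise weight computation
  have key : ∀ (y : ℝ), (y = s ∨ y = -s) → ∀ h : H,
      p h * β ^ ((1 - v h * y) / 2) * (1 - β) ^ ((1 + v h * y) / 2)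
        = p h * (1/2 + (1/2 - β) * (v h * y)) := by
    intro y hy h
    have hvy : v h * y = 1 ∨ v h * y = -1 := by
      rcases hv h with h1 | h1 <;> rcases hy with h2 | h2 <;>
        rcases hs with h3 | h3 <;> rw [h1, h2, h3] <;> norm_num
    rcases hvy with h1 | h1
    · rw [h1, show ((1:ℝ) - 1) / 2 = 0 by norm_num, show ((1:ℝ) + 1) / 2 = 1 by norm_num,
        Real.rpow_zero, Real.rpow_one]
      ring
    · rw [h1, show ((1:ℝ) - -1) / 2 = 1 by norm_num, show ((1:ℝ) + -1) / 2 = 0 by norm_num,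
        Real.rpow_zero, Real.rpow_one]
      ring
  set t := ∑ h, p h * (v h * s) with htdef
  have ht1 : t ≤ 1 := by
    rw [htdef, ← hp1]
    apply Finset.sum_le_sum
    intro h _
    rcases hv h with e | e <;> rcases hs with e' | e' <;> rw [e, e'] <;>
      nlinarith [hp0 h]
  have ht2 : -1 ≤ t := by
    have : ∑ h, -(p h) ≤ t := by
      rw [htdef]
      apply Finset.sum_le_sum
      intro h _
      rcases hv h with e | e <;> rcases hs with e' | e' <;> rw [e, e'] <;>
        nlinarith [hp0 h]
    rw [Finset.sum_neg_distrib, hp1] at this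
    linarith
  -- normalizing constants
  have hZs : (∑ h', p h' * β ^ ((1 - v h' * s) / 2) * (1 - β) ^ ((1 + v h' * s) / 2))
      = 1/2 + (1/2 - β) * t := by
    rw [Finset.sum_congr rfl (fun h _ => key s (Or.inl rfl) h)]
    have e : ∀ h : H, p h * (1/2 + (1/2 - β) * (v h * s))
        = p h * (1/2) + (1/2 - β) * (p h * (v h * s)) := fun h => by ring
    simp_rw [e]
    rw [Finset.sum_add_distrib, ← Finset.sum_mul, ← Finset.mul_sum, hp1, ← htdef]
    ring
  have hZm : (∑ h', p h' * β ^ ((1 - v h' * -s) / 2) * (1 - β) ^ ((1 + v h' * -s) / 2))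
      = 1/2 - (1/2 - β) * t := by
    rw [Finset.sum_congr rfl (fun h _ => key (-s) (Or.inr rfl) h)]
    have e : ∀ h : H, p h * (1/2 + (1/2 - β) * (v h * -s))
        = p h * (1/2) - (1/2 - β) * (p h * (v h * s)) := fun h => by ring
    simp_rw [e]
    rw [Finset.sum_sub_distrib, ← Finset.sum_mul, ← Finset.mul_sum, hp1, ← htdef]
    ring
  have hZspos : (0:ℝ) < 1/2 + (1/2 - β) * t := by nlinarith
  have hZmpos : (0:ℝ) < 1/2 - (1/2 - β) * t := by nlinarith
  -- updated probabilities at hstar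
  have hps' : p' s hstar = p hstar * (1 - β) / (1/2 + (1/2 - β) * t) := by
    rw [hp' s hstar, hZs, key s (Or.inl rfl) hstar, ← hsdef, hss]
    ring_nf
  have hpm' : p' (-s) hstar = p hstar * β / (1/2 - (1/2 - β) * t) := by
    rw [hp' (-s) hstar, hZm, key (-s) (Or.inr rfl) hstar, ← hsdef]
    rw [show v hstar * -s = -1 by rw [← hsdef]; nlinarith]
    ring_nf
  set Zs := 1/2 + (1/2 - β) * t with hZsdef
  set Zm := 1/2 - (1/2 - β) * t with hZmdef
  have hC1 : (1 - p' s hstar) / p' s hstar = (Zs / (1 - β)) / p hstar - 1 := by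
    rw [hps']
    field_simp
  have hC2 : (1 - p' (-s) hstar) / p' (-s) hstar = (Zm / β) / p hstar - 1 := by
    rw [hpm']
    field_simp
    all_goals ring
  have hG : (1 - q) * (Zs / (1 - β)) + q * (Zm / β) ≤ 1 := by
    have e : (1 - q) * (Zs / (1 - β)) + q * (Zm / β)
        = ((1 - q) * Zs * β + q * Zm * (1 - β)) / ((1 - β) * β) := by
      field_simp
      all_goals ring
    rw [e, div_le_one (by positivity), hZsdef, hZmdef]
    nlinarith [mul_nonneg (mul_nonneg (by linarith : (0:ℝ) ≤ 1 - t)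
      (by linarith : (0:ℝ) ≤ β - q)) (by linarith : (0:ℝ) ≤ 1 - 2 * β)]
  rw [hC1, hC2]
  have hq1 : q ≤ 1 := by linarith
  have hmain : (1 - q) * ((Zs / (1 - β)) / p hstar) + q * ((Zm / β) / p hstar)
      ≤ 1 / p hstar := by
    have e : (1 - q) * ((Zs / (1 - β)) / p hstar) + q * ((Zm / β) / p hstar)
        = ((1 - q) * (Zs / (1 - β)) + q * (Zm / β)) / p hstar := by ring
    rw [e]
    exact div_le_div_of_nonneg_right hG hps.le |>.trans_eq rfl
  have hrhs : (1 - p hstar) / p hstar = 1 / p hstar - 1 := by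
    field_simp
  rw [hrhs]
  nlinarith [hmain]
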